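/- Fix u ∈ ℝⁿ, h ∈ ℝⁿ, symmetric H ∈ ℝⁿˣⁿ, and suppose each component [h - Hu]_i ≠ 0 and the approximation ∫_{[-1,1]ⁿ} e^{ũᵀh - ũᵀHu + ½ũᵀHũ} dũ = ∫_{[-1,1]ⁿ} e^{ũᵀh - ũᵀHu} dũ holds exactly (Assumption on negligible quadratic term). Then the log of p(u) := e^{r(u)} / ∫_{[-1,1]ⁿ} e^{r(u)+(ũ-u)ᵀh+½(ũ-u)ᵀH(ũ-u)} dũ equals -½uᵀHu + uᵀh + Σ_{i=1}^{n} log([h - Hu]_i / (e^{[h-Hu]_i} - e^{-[h-Hu]_i})), provided each factor [h-Hu]_i/(e^{[h-Hu]_i}-e^{-[h-Hu]_i}) and e^{-½uᵀHu + uᵀh} are positive. -/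

import Mathlib

open MeasureTheory Matrix

lemma expIcc (a : ℝ) (ha : a ≠ 0) :
    ∫ t in Set.Icc (-1 : ℝ) 1, Real.exp (t * a) =
      (Real.exp a - Real.exp (-a)) / a := by
  rw [MeasureTheory.integral_Icc_eq_integral_Ioc,
    ← intervalIntegral.integral_of_le (by norm_num : (-1:ℝ) ≤ 1)]
  have D : ∀ x ∈ Set.uIcc (-1:ℝ) 1,
      HasDerivAt (fun y : ℝ => Real.exp (y * a) / a) (Real.exp (x * a)) x := by
    intro x _
    have h1 : HasDerivAt (fun y : ℝ => y * a) a x := by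
      simpa using (hasDerivAt_id x).mul_const a
    have := ((Real.hasDerivAt_exp (x * a)).comp x h1).div_const a
    simpa [mul_div_assoc, mul_div_cancel_right₀ _ ha] using this
  rw [intervalIntegral.integral_eq_sub_of_hasDerivAt D ((Real.continuous_exp.comp (continuous_id.mul continuous_const)).intervalIntegrable _ _)]
  ring_nf

lemma piIntegral (n : ℕ) (g : Fin n → ℝ → ℝ) :
    ∫ x in Set.univ.pi (fun _ : Fin n => Set.Icc (-1 : ℝ) 1), ∏ i, g i (x i) =
      ∏ i, ∫ t in Set.Icc (-1 : ℝ) 1, g i t := by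
  rw [← integral_indicator (MeasurableSet.univ_pi fun _ => measurableSet_Icc)]
  have key : ∀ x : Fin n → ℝ,
      (Set.univ.pi fun _ : Fin n => Set.Icc (-1:ℝ) 1).indicator
        (fun x => ∏ i, g i (x i)) x =
      ∏ i, (Set.Icc (-1:ℝ) 1).indicator (g i) (x i) := by
    intro x
    by_cases hx : x ∈ Set.univ.pi fun _ : Fin n => Set.Icc (-1:ℝ) 1
    · rw [Set.indicator_of_mem hx]
      exact Finset.prod_congr rfl fun i _ =>
        (Set.indicator_of_mem (hx i (Set.mem_univ i)) _).symm
    · rw [Set.indicator_of_notMem hx]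
      rw [Set.mem_univ_pi] at hx
      push_neg at hx
      obtain ⟨i, hi⟩ := hx
      exact (Finset.prod_eq_zero (Finset.mem_univ i)
        (Set.indicator_of_notMem hi _)).symm
  simp_rw [key]
  rw [MeasureTheory.integral_fintype_prod_volume_eq_prod
    (f := fun i => (Set.Icc (-1:ℝ) 1).indicator (g i))]
  exact Finset.prod_congr rfl fun i _ => integral_indicator measurableSet_Icc

theorem stmt10 (n : ℕ) (u h : Fin n → ℝ)
    (H : Matrix (Fin n) (Fin n) ℝ) (hH : H.IsSymm) (r : ℝ)
    (box : Set (Fin n → ℝ))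
    (hbox : box = Set.univ.pi (fun _ : Fin n => Set.Icc (-1 : ℝ) 1))
    (hne : ∀ i, (h - H *ᵥ u) i ≠ 0)
    (happrox :
      (∫ ut in box,
          Real.exp (ut ⬝ᵥ h - ut ⬝ᵥ (H *ᵥ u) + (1 / 2) * (ut ⬝ᵥ (H *ᵥ ut)))) =
        ∫ ut in box, Real.exp (ut ⬝ᵥ h - ut ⬝ᵥ (H *ᵥ u)))
    (hposfac : ∀ i, 0 < (h - H *ᵥ u) i /
        (Real.exp ((h - H *ᵥ u) i) - Real.exp (-((h - H *ᵥ u) i))))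
    (hpos : 0 < Real.exp (-(1 / 2) * (u ⬝ᵥ (H *ᵥ u)) + u ⬝ᵥ h))
    (p : ℝ)
    (hp : p = Real.exp r /
        ∫ ut in box,
          Real.exp (r + (ut - u) ⬝ᵥ h +
            (1 / 2) * ((ut - u) ⬝ᵥ (H *ᵥ (ut - u))))) :
    Real.log p =
      -(1 / 2) * (u ⬝ᵥ (H *ᵥ u)) + u ⬝ᵥ h +
        ∑ i, Real.log ((h - H *ᵥ u) i /
          (Real.exp ((h - H *ᵥ u) i) - Real.exp (-((h - H *ᵥ u) i)))) := by
  set a : Fin n → ℝ := h - H *ᵥ u with ha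
  set C : ℝ := r - u ⬝ᵥ h + (1 / 2) * (u ⬝ᵥ (H *ᵥ u)) with hC
  -- symmetry of the quadratic form
  have hsymm : ∀ v w : Fin n → ℝ, v ⬝ᵥ (H *ᵥ w) = w ⬝ᵥ (H *ᵥ v) := by
    intro v w
    rw [Matrix.dotProduct_mulVec, ← Matrix.mulVec_transpose, hH.eq,
      dotProduct_comm]
  -- pointwise identity for the exponent
  have hpt : ∀ ut : Fin n → ℝ,
      r + (ut - u) ⬝ᵥ h + (1 / 2) * ((ut - u) ⬝ᵥ (H *ᵥ (ut - u))) =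
      C + (ut ⬝ᵥ h - ut ⬝ᵥ (H *ᵥ u) + (1 / 2) * (ut ⬝ᵥ (H *ᵥ ut))) := by
    intro ut
    have := hsymm u ut
    simp only [sub_dotProduct, dotProduct_sub, Matrix.mulVec_sub, hC]
    linarith
  -- denominator evaluation
  have hden : (∫ ut in box,
      Real.exp (r + (ut - u) ⬝ᵥ h + (1 / 2) * ((ut - u) ⬝ᵥ (H *ᵥ (ut - u))))) =
      Real.exp C * ∏ i, (Real.exp (a i) - Real.exp (-a i)) / a i := by
    have step1 : (∫ ut in box,
        Real.exp (r + (ut - u) ⬝ᵥ h + (1 / 2) * ((ut - u) ⬝ᵥ (H *ᵥ (ut - u))))) =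
        Real.exp C * ∫ ut in box,
          Real.exp (ut ⬝ᵥ h - ut ⬝ᵥ (H *ᵥ u) + (1 / 2) * (ut ⬝ᵥ (H *ᵥ ut))) := by
      rw [← integral_const_mul]
      congr 1
      ext ut
      rw [hpt ut, Real.exp_add]
    rw [step1, happrox]
    congr 1
    have step2 : (∫ ut in box, Real.exp (ut ⬝ᵥ h - ut ⬝ᵥ (H *ᵥ u))) =
        ∫ ut in box, ∏ i, Real.exp (ut i * a i) := by
      congr 1
      ext ut
      rw [← Real.exp_sum]
      congr 1
      simp [ha, dotProduct, Finset.sum_sub_distrib, mul_sub]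
    rw [step2, hbox, piIntegral n (fun i t => Real.exp (t * a i))]
    exact Finset.prod_congr rfl fun i _ => expIcc (a i) (hne i)
  -- positivity facts
  have hb : ∀ i, (Real.exp (a i) - Real.exp (-a i)) / a i =
      (a i / (Real.exp (a i) - Real.exp (-a i)))⁻¹ := fun i => by
    rw [inv_div]
  have hbpos : ∀ i, 0 < (Real.exp (a i) - Real.exp (-a i)) / a i := fun i => by
    rw [hb i]; exact inv_pos.mpr (hposfac i)
  have hprodpos : 0 < ∏ i, (Real.exp (a i) - Real.exp (-a i)) / a i :=
    Finset.prod_pos fun i _ => hbpos i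
  -- compute the log
  rw [hp, hden, Real.log_div (Real.exp_ne_zero r)
      (mul_ne_zero (Real.exp_ne_zero C) hprodpos.ne'),
    Real.log_mul (Real.exp_ne_zero C) hprodpos.ne', Real.log_exp, Real.log_exp,
    Real.log_prod (fun i _ => (hbpos i).ne')]
  have : ∀ i : Fin n, Real.log ((Real.exp (a i) - Real.exp (-a i)) / a i) =
      -Real.log (a i / (Real.exp (a i) - Real.exp (-a i))) := fun i => by
    rw [hb i, Real.log_inv]
  simp_rw [this, Finset.sum_neg_distrib]
  rw [hC]
  ring
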